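/- For a unit vector a ∈ R^3 and p ≥ 0, the operator A = (p/2)(I + (1/2) a·σ) satisfies A = Σ_{s_x,s_y,s_z=±1} p·Θ(a · v_{s_x s_y s_z}) G_{s_x s_y s_z} + α·I, where G_{s_x s_y s_z} = (1/16)(2I + v_{s_x s_y s_z}·σ), Θ(t) = max(t,0), and α = (p/2)(1 - (1/4) Σ_{s_x,s_y,s_z=±1} Θ(a · v_{s_x s_y s_z})). -/

import Mathlib

open RealInnerProductSpace Matrix

noncomputable def σx : Matrix (Fin 2) (Fin 2) ℂ := !![0, 1; 1, 0]
noncomputable def σy : Matrix (Fin 2) (Fin 2) ℂ := !![0, -Complex.I; Complex.I, 0]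
noncomputable def σz : Matrix (Fin 2) (Fin 2) ℂ := !![1, 0; 0, -1]

/-- The vertex `(s_x, s_y, s_z)` of the cube `[-1,1]^3`, signs encoded by booleans. -/
noncomputable def cubeVtx (s : Fin 3 → Bool) : EuclideanSpace ℝ (Fin 3) :=
  WithLp.toLp 2 (fun k => if s k then (1 : ℝ) else -1)

/-- `b·σ` for `b ∈ ℝ³`. -/
noncomputable def dotSigma (b : EuclideanSpace ℝ (Fin 3)) : Matrix (Fin 2) (Fin 2) ℂ :=
  b 0 • σx + b 1 • σy + b 2 • σz

/-- The coarse-grained octant operator `G_{s_x s_y s_z} = (1/16)(2𝟙 + v_s·σ)`. -/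
noncomputable def Goct (s : Fin 3 → Bool) : Matrix (Fin 2) (Fin 2) ℂ :=
  ((1 : ℝ) / 16) • ((2 : ℝ) • (1 : Matrix (Fin 2) (Fin 2) ℂ) + dotSigma (cubeVtx s))

theorem povm_element_decomposition
    (a : EuclideanSpace ℝ (Fin 3)) (ha : ‖a‖ = 1) (p : ℝ) (hp : 0 ≤ p) :
    (p / 2) • ((1 : Matrix (Fin 2) (Fin 2) ℂ) + ((1 : ℝ) / 2) • dotSigma a)
      = ∑ s : Fin 3 → Bool, (p * max ⟪a, cubeVtx s⟫ 0) • Goct s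
        + ((p / 2) * (1 - (1 / 4) * ∑ s : Fin 3 → Bool, max ⟪a, cubeVtx s⟫ 0)) •
            (1 : Matrix (Fin 2) (Fin 2) ℂ) := by
  have huniv : (Finset.univ : Finset (Fin 3 → Bool)) =
    {![true,true,true], ![true,true,false], ![true,false,true], ![true,false,false],
     ![false,true,true], ![false,true,false], ![false,false,true], ![false,false,false]} := by decide
  have key : ∀ k : Fin 3, ∑ s : Fin 3 → Bool, max ⟪a, cubeVtx s⟫ 0 * cubeVtx s k = 4 * a k := by
    intro k
    rw [huniv]
    rw [Finset.sum_insert (by decide), Finset.sum_insert (by decide), Finset.sum_insert (by decide),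
      Finset.sum_insert (by decide), Finset.sum_insert (by decide), Finset.sum_insert (by decide),
      Finset.sum_insert (by decide), Finset.sum_singleton]
    simp only [PiLp.inner_apply, RCLike.inner_apply, conj_trivial, cubeVtx, Fin.sum_univ_three,
      Matrix.cons_val_zero, Matrix.cons_val_one, Matrix.head_cons, Matrix.cons_val_two,
      Matrix.tail_cons]
    norm_num
    have h1 : max (a 0 + a 1 + a 2) 0 - max (-a 0 + -a 1 + -a 2) 0 = a 0 + a 1 + a 2 := by
      rw [show -a 0 + -a 1 + -a 2 = -(a 0 + a 1 + a 2) by ring]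
      exact max_zero_sub_max_neg_zero_eq_self _
    have h2 : max (a 0 + a 1 + -a 2) 0 - max (-a 0 + -a 1 + a 2) 0 = a 0 + a 1 + -a 2 := by
      rw [show -a 0 + -a 1 + a 2 = -(a 0 + a 1 + -a 2) by ring]
      exact max_zero_sub_max_neg_zero_eq_self _
    have h3 : max (a 0 + -a 1 + a 2) 0 - max (-a 0 + a 1 + -a 2) 0 = a 0 + -a 1 + a 2 := by
      rw [show -a 0 + a 1 + -a 2 = -(a 0 + -a 1 + a 2) by ring]
      exact max_zero_sub_max_neg_zero_eq_self _
    have h4 : max (a 0 + -a 1 + -a 2) 0 - max (-a 0 + a 1 + a 2) 0 = a 0 + -a 1 + -a 2 := by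
      rw [show -a 0 + a 1 + a 2 = -(a 0 + -a 1 + -a 2) by ring]
      exact max_zero_sub_max_neg_zero_eq_self _
    fin_cases k <;> simp <;> linarith [h1, h2, h3, h4]
  have hG : ∀ s, (p * max ⟪a, cubeVtx s⟫ 0) • Goct s
      = (p/8 * max ⟪a, cubeVtx s⟫ 0) • (1 : Matrix (Fin 2) (Fin 2) ℂ)
        + (p/16 * (max ⟪a, cubeVtx s⟫ 0 * cubeVtx s 0)) • σx
        + (p/16 * (max ⟪a, cubeVtx s⟫ 0 * cubeVtx s 1)) • σy
        + (p/16 * (max ⟪a, cubeVtx s⟫ 0 * cubeVtx s 2)) • σz := by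
    intro s
    rw [Goct, dotSigma]
    match_scalars <;> ring
  rw [Finset.sum_congr rfl fun s _ => hG s]
  simp only [Finset.sum_add_distrib, ← Finset.sum_smul, ← Finset.mul_sum, key]
  rw [dotSigma]
  match_scalars <;> ring
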